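/- For any k,l ≥ 1 the subsets C_{k,l} and Φ_{k,l}C_{l,k} = {Φ_{k,l}∘τ : τ ∈ C_{l,k}} of the symmetric group S_{k+l} are disjoint. -/

import Mathlib

/-- An `(s,t)`-shuffle `(α,β)` with `α(1) = 1`: a pair of strictly increasing maps
`α : {1,…,s} → {1,…,s+t}`, `β : {1,…,t} → {1,…,s+t}` with disjoint images and `α(1) = 1`
(everything 0-indexed, so the last condition reads `α 0 = 0`).  This is the set `Sh¹(s,t)`. -/
structure Shuffle1 (s t : ℕ) where
  α : Fin s → Fin (s + t)
  β : Fin t → Fin (s + t)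
  mono_alpha : StrictMono α
  mono_beta : StrictMono β
  disj : ∀ i j, α i ≠ β j
  first : ∀ hs : 0 < s, α ⟨0, hs⟩ = ⟨0, Nat.lt_of_lt_of_le hs (Nat.le_add_right s t)⟩

/-- The underlying function of the permutation `σ̃_{α,β,k,l} ∈ S_{k+l}`: it fixes `1,…,k` and
sends `k+1,…,k+i, k+i+1,…,k+l` to `k+β(i),…,k+β(1), k+α(1),…,k+α(l−i)` (here 0-indexed). -/
def sigmaTildeFun (k l i : ℕ) (hi : i < l) (sh : Shuffle1 (l - i) i) :
    Fin (k + l) → Fin (k + l) := fun x =>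
  if hx : (x : ℕ) < k then x
  else if hx2 : (x : ℕ) < k + i then
    have j := sh.β ⟨i - 1 - ((x : ℕ) - k), by omega⟩
    ⟨k + (j : ℕ), by have := j.isLt; omega⟩
  else
    have j := sh.α ⟨(x : ℕ) - k - i, by have := x.isLt; omega⟩
    ⟨k + (j : ℕ), by have := j.isLt; omega⟩

/-- The transposition `(1,2) ∈ Sₙ` (0-indexed: it swaps `0` and `1`), for `n ≥ 2`. -/
def swap01 (n : ℕ) : Equiv.Perm (Fin n) :=
  if h : 2 ≤ n then Equiv.swap ⟨0, by omega⟩ ⟨1, by omega⟩ else 1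

/-- The set `C_{k,l} = {σ_{α,β,k,l} = σ̃_{α,β,k,l} ∘ (1,2)^i : 0 ≤ i ≤ l−1, (α,β) ∈ Sh¹(l−i,i)}`
as a subset of `S_{k+l}`. -/
def Cset (k l : ℕ) : Set (Equiv.Perm (Fin (k + l))) :=
  { σ | ∃ (i : ℕ) (hi : i < l) (sh : Shuffle1 (l - i) i),
      ∀ x, σ x = sigmaTildeFun k l i hi sh ((swap01 (k + l) ^ i) x) }

/-- The permutation `Φ_{k,l} ∈ S_{k+l}` given by `Φ_{k,l}(i) = i+k` for `i ≤ l` and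
`Φ_{k,l}(i) = i−l` for `i > l` (here 0-indexed). -/
def Phi (k l : ℕ) : Equiv.Perm (Fin (k + l)) where
  toFun x := if _ : (x : ℕ) < l then ⟨(x : ℕ) + k, by omega⟩
             else ⟨(x : ℕ) - l, by have := x.isLt; omega⟩
  invFun x := if _ : (x : ℕ) < k then ⟨(x : ℕ) + l, by omega⟩
              else ⟨(x : ℕ) - k, by have := x.isLt; omega⟩
  left_inv x := by
    rcases x with ⟨x, hx⟩
    dsimp only
    split_ifs <;> rename_i h1 h2 <;>
      simp only [Fin.val_mk, Fin.mk.injEq] at h2 ⊢ <;> omega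
  right_inv x := by
    rcases x with ⟨x, hx⟩
    dsimp only
    split_ifs <;> rename_i h1 h2 <;>
      simp only [Fin.val_mk, Fin.mk.injEq] at h2 ⊢ <;> omega

/-- The set `Φ_{k,l} C_{l,k} = {Φ_{k,l} ∘ τ : τ ∈ C_{l,k}} ⊆ S_{k+l}`, where `C_{l,k} ⊆ S_{l+k}`
is identified with a subset of `S_{k+l}` via the canonical relabelling `Fin (l+k) ≃ Fin (k+l)`. -/
def PhiCset (k l : ℕ) : Set (Equiv.Perm (Fin (k + l))) :=
  (fun τ => Phi k l * (finCongr (Nat.add_comm l k)).permCongr τ) '' Cset l k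

/-- The set `T_{k,l} = C_{k,l} ∪ Φ_{k,l} C_{l,k} ⊆ S_{k+l}`. -/
def Tset (k l : ℕ) : Set (Equiv.Perm (Fin (k + l))) := Cset k l ∪ PhiCset k l

lemma swap01_sq (n : ℕ) : swap01 n * swap01 n = 1 := by
  unfold swap01
  split_ifs with h
  · exact Equiv.swap_mul_self _ _
  · simp

lemma swap01_pow (n i : ℕ) : swap01 n ^ i = if Even i then 1 else swap01 n := by
  induction i with
  | zero => simp
  | succ m ih =>
    rw [pow_succ, ih]
    rcases Nat.even_or_odd m with he | ho
    · have h1 : ¬ Even (m + 1) := by simp [Nat.even_add_one, he]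
      simp [he, h1]
    · have h0 : ¬ Even m := Nat.not_even_iff_odd.mpr ho
      have h1 : Even (m + 1) := by simp [Nat.even_add_one, h0]
      simp [h0, h1, swap01_sq]

lemma swap01_pow_invol (n i : ℕ) (x : Fin n) :
    (swap01 n ^ i) ((swap01 n ^ i) x) = x := by
  have : (swap01 n ^ i) * (swap01 n ^ i) = 1 := by
    rw [swap01_pow]
    split_ifs
    · simp
    · exact swap01_sq n
  have := congrFun (congrArg (fun (e : Equiv.Perm (Fin n)) => (e : Fin n → Fin n)) this) x
  simpa using this

lemma swap01_apply_of_two_le (n : ℕ) (x : Fin n) (hx : 2 ≤ (x : ℕ)) :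
    swap01 n x = x := by
  unfold swap01
  have h2 : 2 ≤ n := le_trans hx (le_of_lt x.isLt)
  rw [dif_pos h2]
  apply Equiv.swap_apply_of_ne_of_ne <;>
    · intro h
      apply absurd (congrArg Fin.val h)
      simp only [Fin.val_mk]
      omega

lemma swap01_pow_val (n i : ℕ) (x : Fin n) (hx : 2 ≤ (x : ℕ)) :
    ((swap01 n ^ i) x : ℕ) = (x : ℕ) := by
  rw [swap01_pow]
  split_ifs
  · simp
  · rw [swap01_apply_of_two_le n x hx]

/-- Any element of `C_{k,l}` sends some `x` with `x < l` to `0`. -/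
lemma Cset_exists (k l : ℕ) (hk : 1 ≤ k) (hl : 1 ≤ l)
    (σ : Equiv.Perm (Fin (k + l))) (hσ : σ ∈ Cset k l) :
    ∃ x : Fin (k + l), (x : ℕ) < l ∧ (σ x : ℕ) = 0 := by
  obtain ⟨i, hi, sh, hspec⟩ := hσ
  have h0 : (0 : ℕ) < k + l := by omega
  set g := swap01 (k + l) with hg
  refine ⟨(g ^ i) ⟨0, h0⟩, ?_, ?_⟩
  · rw [swap01_pow]
    split_ifs with he
    · simpa using (show 0 < l by omega)
    · have hi1 : 1 ≤ i := by
        rcases Nat.eq_zero_or_pos i with h | h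
        · exact absurd (h ▸ (⟨0, rfl⟩ : Even 0)) he
        · exact h
      have hl2 : 2 ≤ l := by omega
      unfold swap01
      have h2 : 2 ≤ k + l := by omega
      rw [dif_pos h2, Equiv.swap_apply_left]
      simpa using (show 1 < l by omega)
  · rw [hspec, swap01_pow_invol]
    unfold sigmaTildeFun
    rw [dif_pos (show ((⟨0, h0⟩ : Fin (k+l)) : ℕ) < k by simpa using (show 0 < k by omega))]

/-- Any preimage of `0` under an element of `Φ_{k,l} C_{l,k}` has value `≥ l`. -/
lemma PhiCset_ge (k l : ℕ) (hk : 1 ≤ k) (hl : 1 ≤ l)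
    (σ : Equiv.Perm (Fin (k + l))) (hσ : σ ∈ PhiCset k l)
    (x : Fin (k + l)) (hx : (σ x : ℕ) = 0) : l ≤ (x : ℕ) := by
  obtain ⟨τ, hτC, rfl⟩ := hσ
  obtain ⟨j, hj, sh, hspec⟩ := hτC
  set e := finCongr (Nat.add_comm l k) with he
  set x' : Fin (l + k) := e.symm x with hx'
  have hxval : (x' : ℕ) = (x : ℕ) := by simp [hx', he]
  -- σ x = Phi k l (e (τ x'))
  have happ : (Phi k l) (e (τ x')) = (Phi k l * e.permCongr τ) x := by
    simp [Equiv.permCongr_apply, hx']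
  -- value of Phi (e (τ x')) is 0
  have hval : ((Phi k l) (e (τ x')) : ℕ) = 0 := by rw [happ]; exact hx
  -- deduce (τ x').val = l
  have hyl : ((τ x' : Fin (l + k)) : ℕ) = l := by
    have hev : ((e (τ x')) : ℕ) = ((τ x') : ℕ) := by simp [he]
    set w : Fin (k + l) := e (τ x') with hw
    have : ((Phi k l) w : ℕ) = 0 := hval
    have hPhi : ((Phi k l) w : ℕ) =
        if (w : ℕ) < l then (w : ℕ) + k else (w : ℕ) - l := by
      simp only [Phi, Equiv.coe_fn_mk]
      split_ifs <;> simp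
    rw [hPhi] at this
    have hwlt := w.isLt
    split_ifs at this with h
    · omega
    · omega
  -- now analyse τ x' via the spec
  have hτx := hspec x'
  set z := (swap01 (l + k) ^ j) x' with hz
  rw [hτx] at hyl
  -- unfold sigmaTildeFun at hyl
  have hzval : (z : ℕ) = l + j := by
    unfold sigmaTildeFun at hyl
    split_ifs at hyl with h1 h2
    · omega
    · exfalso
      simp only [Fin.val_mk] at hyl
      have hkj : 0 < k - j := by omega
      have hd := sh.disj ⟨0, hkj⟩ ⟨j - 1 - ((z : ℕ) - l), by omega⟩
      rw [sh.first hkj] at hd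
      apply hd
      apply Fin.ext
      simp only [Fin.val_mk]
      omega
    · simp only [Fin.val_mk] at hyl
      have hkj : 0 < k - j := by omega
      have ha0 : (sh.α ⟨(z : ℕ) - l - j, by have := z.isLt; omega⟩ : ℕ) = 0 := by omega
      have htt : (z : ℕ) - l - j = 0 := by
        by_contra hne
        have h0t : (⟨0, hkj⟩ : Fin (k - j)) < ⟨(z : ℕ) - l - j, by have := z.isLt; omega⟩ := by
          simp only [Fin.lt_def, Fin.val_mk]; omega
        have := sh.mono_alpha h0t
        rw [sh.first hkj] at this
        simp only [Fin.lt_def, Fin.val_mk] at this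
        omega
      have := z.isLt
      omega
  -- finally: x'.val = z.val ≥ l
  have hxz : (x' : ℕ) = (z : ℕ) := by
    have hx'' : x' = (swap01 (l + k) ^ j) z := by
      rw [hz, swap01_pow_invol]
    rcases Nat.lt_or_ge (l + j) 2 with hlj | hlj
    · have hj0 : j = 0 := by omega
      rw [hx'', hj0, pow_zero]
      simp
    · rw [hx'', swap01_pow_val _ _ _ (by omega)]
  omega

/-- For `k, l ≥ 1` the subsets `C_{k,l}` and `Φ_{k,l}C_{l,k}` of `S_{k+l}` are disjoint. -/
theorem Cset_disjoint_PhiCset (k l : ℕ) (hk : 1 ≤ k) (hl : 1 ≤ l) :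
    Cset k l ∩ PhiCset k l = ∅ := by
  rw [Set.eq_empty_iff_forall_notMem]
  rintro σ ⟨hC, hP⟩
  obtain ⟨x, hxl, hx0⟩ := Cset_exists k l hk hl σ hC
  have := PhiCset_ge k l hk hl σ hP x hx0
  omega
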